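/- For α ∈ (0,1) and t > 1 - α, there exists z ∈ ℂ with z ∉ (-∞, 0] such that z^{2t} + 2cos(πα) z^t + 1 = 0, where z^t = exp(t · Log z) with Log the principal branch of the logarithm. Consequently the function z ↦ 1/(z^{2t} + 2cos(πα) z^t + 1) fails to extend analytically to ℂ \ (-∞,0]. -/

import Mathlib

open Real

theorem stmt_2 (α t : ℝ) (hα : α ∈ Set.Ioo (0:ℝ) 1) (ht : 1 - α < t) :
    (∃ z ∈ Complex.slitPlane,
        z ^ (2 * t : ℂ) + 2 * (Real.cos (π * α) : ℂ) * z ^ (t : ℂ) + 1 = 0) ∧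
    ¬ ∃ F : ℂ → ℂ, AnalyticOn ℂ F Complex.slitPlane ∧
        ∀ x : ℝ, 0 < x →
          F x = ((x : ℂ) ^ (2 * t : ℂ)
              + 2 * (Real.cos (π * α) : ℂ) * (x : ℂ) ^ (t : ℂ) + 1)⁻¹ := by
  obtain ⟨hα0, hα1⟩ := hα
  have ht0 : 0 < t := lt_of_le_of_lt (by linarith) ht
  set θ : ℝ := (1 - α) * π / t with hθdef
  have hθpos : 0 < θ := by
    apply div_pos (mul_pos (by linarith) Real.pi_pos) ht0
  have hθlt : θ < π := by
    rw [hθdef, div_lt_iff₀ ht0]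
    nlinarith [Real.pi_pos]
  set z₀ : ℂ := Complex.exp (θ * Complex.I) with hz₀
  have hmem : z₀ ∈ Complex.slitPlane := by
    apply Complex.mem_slitPlane_iff.2
    right
    rw [hz₀, Complex.exp_ofReal_mul_I_im]
    exact ne_of_gt (Real.sin_pos_of_pos_of_lt_pi hθpos hθlt)
  have him : ((θ : ℂ) * Complex.I).im = θ := by simp
  have hlog : Complex.log z₀ = θ * Complex.I := by
    rw [hz₀, Complex.log_exp (by rw [him]; linarith [Real.pi_pos]) (by rw [him]; linarith)]
  have hpow : ∀ c : ℂ, z₀ ^ c = Complex.exp (θ * Complex.I * c) := by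
    intro c
    rw [Complex.cpow_def_of_ne_zero (Complex.exp_ne_zero _), hlog]
  have hθt : (θ : ℝ) * t = (1 - α) * π := by
    rw [hθdef, div_mul_cancel₀ _ (ne_of_gt ht0)]
  -- key algebraic computation
  have hzero : z₀ ^ (2 * t : ℂ) + 2 * (Real.cos (π * α) : ℂ) * z₀ ^ (t : ℂ) + 1 = 0 := by
    have h1 : z₀ ^ (t : ℂ) = Complex.exp (((1 - α) * π : ℝ) * Complex.I) := by
      rw [hpow]; congr 1; rw [← hθt]; push_cast; ring
    have h2 : z₀ ^ (2 * t : ℂ) = Complex.exp (((1 - α) * π : ℝ) * Complex.I) ^ 2 := by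
      rw [hpow, ← Complex.exp_nat_mul]; congr 1; rw [← hθt]; push_cast; ring
    have hw : Complex.exp (((1 - α) * π : ℝ) * Complex.I)
        = - Complex.exp (-((π * α : ℝ) * Complex.I)) := by
      have : (((1 - α) * π : ℝ) : ℂ) * Complex.I
          = (π : ℂ) * Complex.I + (-((π * α : ℝ) * Complex.I)) := by push_cast; ring
      rw [this, Complex.exp_add, Complex.exp_pi_mul_I]; ring
    have hab : Complex.exp ((π * α : ℝ) * Complex.I)
        * Complex.exp (-((π * α : ℝ) * Complex.I)) = 1 := by
      rw [← Complex.exp_add]; simp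
    have hcos : 2 * (Real.cos (π * α) : ℂ)
        = Complex.exp ((π * α : ℝ) * Complex.I) + Complex.exp (-((π * α : ℝ) * Complex.I)) := by
      rw [Complex.ofReal_cos, Complex.two_cos]; ring
    rw [h1, h2, hw, hcos]
    ring_nf
    linear_combination -hab
  refine ⟨⟨z₀, hmem, hzero⟩, ?_⟩
  rintro ⟨F, hF, hFx⟩
  -- the denominator function
  set g : ℂ → ℂ := fun z => z ^ (2 * t : ℂ) + 2 * (Real.cos (π * α) : ℂ) * z ^ (t : ℂ) + 1
    with hg
  have hganal : AnalyticOnNhd ℂ g Complex.slitPlane := by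
    apply AnalyticOnNhd.add
    apply AnalyticOnNhd.add
    · exact (analyticOnNhd_id).cpow analyticOnNhd_const (fun z hz => hz)
    · exact analyticOnNhd_const.mul ((analyticOnNhd_id).cpow analyticOnNhd_const (fun z hz => hz))
    · exact analyticOnNhd_const
  have hFanal : AnalyticOnNhd ℂ F Complex.slitPlane :=
    (Complex.isOpen_slitPlane.analyticOn_iff_analyticOnNhd).1 hF
  -- g is nonzero on positive reals
  have hcos2 : (Real.cos (π * α)) ^ 2 < 1 := by
    have hs : 0 < Real.sin (π * α) := Real.sin_pos_of_pos_of_lt_pi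
      (mul_pos Real.pi_pos hα0) (by nlinarith [Real.pi_pos])
    nlinarith [Real.sin_sq_add_cos_sq (π * α)]
  have hgx : ∀ x : ℝ, 0 < x → g x ≠ 0 := by
    intro x hx
    have h1 : (x : ℂ) ^ (t : ℂ) = ((x ^ t : ℝ) : ℂ) := (Complex.ofReal_cpow hx.le t).symm
    have h2 : (x : ℂ) ^ (2 * t : ℂ) = (((x ^ t) ^ 2 : ℝ) : ℂ) := by
      have : ((2 : ℝ) * t : ℂ) = ((2 * t : ℝ) : ℂ) := by push_cast; ring
      rw [show (2 * (t : ℂ)) = ((2 * t : ℝ) : ℂ) by push_cast; ring,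
        ← Complex.ofReal_cpow hx.le]
      congr 1
      rw [mul_comm, Real.rpow_mul hx.le]
      norm_num
    rw [hg]
    simp only [h1, h2]
    set y : ℝ := x ^ t with hy
    have hypos : 0 < y := Real.rpow_pos_of_pos hx t
    have : y ^ 2 + 2 * Real.cos (π * α) * y + 1 > 0 := by
      nlinarith [sq_nonneg (y + Real.cos (π * α))]
    intro hcon
    have : ((y ^ 2 + 2 * Real.cos (π * α) * y + 1 : ℝ) : ℂ) = 0 := by
      push_cast at hcon ⊢; linear_combination hcon
    rw [Complex.ofReal_eq_zero] at this
    linarith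
  -- h := F * g - 1 vanishes on positive reals, hence on slitPlane
  set h : ℂ → ℂ := fun z => F z * g z - 1 with hh
  have hhanal : AnalyticOnNhd ℂ h Complex.slitPlane :=
    (hFanal.mul hganal).sub analyticOnNhd_const
  haveI : ContractibleSpace ↥Complex.slitPlane :=
    Complex.starConvex_one_slitPlane.contractibleSpace ⟨1, Complex.one_mem_slitPlane⟩
  have hpre : IsPreconnected Complex.slitPlane :=
    (isConnected_iff_connectedSpace.2 inferInstance).isPreconnected
  have hone : (1 : ℂ) ∈ Complex.slitPlane := Complex.one_mem_slitPlane
  have hfreq : ∃ᶠ z in nhdsWithin (1 : ℂ) {(1 : ℂ)}ᶜ, h z = 0 := by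
    have hu : Filter.Tendsto (fun n : ℕ => ((1 + 1 / (n + 1) : ℝ) : ℂ)) Filter.atTop
        (nhdsWithin (1 : ℂ) {(1 : ℂ)}ᶜ) := by
      rw [tendsto_nhdsWithin_iff]
      constructor
      · have : Filter.Tendsto (fun n : ℕ => (1 + 1 / (n + 1) : ℝ)) Filter.atTop (nhds 1) := by
          have := tendsto_one_div_add_atTop_nhds_zero_nat (𝕜 := ℝ)
          have := Filter.Tendsto.const_add (1 : ℝ) this
          simpa using this
        have := (Complex.continuous_ofReal.tendsto 1).comp this
        simpa [Function.comp_def] using this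
      · apply Filter.Eventually.of_forall
        intro n
        simp only [Set.mem_compl_iff, Set.mem_singleton_iff]
        intro hcon
        have : (1 + 1 / ((n : ℝ) + 1) : ℝ) = 1 := by
          exact_mod_cast hcon
        have hn : 0 < 1 / ((n : ℝ) + 1) := by positivity
        linarith
    apply hu.frequently
    apply Filter.Eventually.frequently
    apply Filter.Eventually.of_forall
    intro n
    have hxpos : (0 : ℝ) < 1 + 1 / (n + 1) := by positivity
    have := hFx _ hxpos
    rw [hh]
    simp only
    rw [this, inv_mul_cancel₀ (hgx _ hxpos)]
    ring
  have heq : Set.EqOn h 0 Complex.slitPlane :=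
    hhanal.eqOn_zero_of_preconnected_of_frequently_eq_zero hpre hone hfreq
  have := heq hmem
  rw [hh] at this
  simp only [Pi.zero_apply] at this
  rw [show g z₀ = 0 from hzero] at this
  simp at this
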